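/- arXiv:1610.01750 — 3 statements merged into one kernel-verified Lean document; each statement's English description precedes it below -/
import Mathlib

section
/- If X is an ultrametric space and Y is a dense subspace of X, then the set of nonzero distances realized in Y equals the set of nonzero distances realized in X, i.e., R(Y) = R(X) where R(Z) = {d(x,y) : x,y ∈ Z, x ≠ y}. -/
private lemma ultra_iso {X : Type*} [MetricSpace X] [IsUltrametricDist X]
    {a b c : X} (h : dist a b < dist b c) : dist a c = dist b c := by
  apply le_antisymm
  · calc dist a c ≤ max (dist a b) (dist b c) := IsUltrametricDist.dist_triangle_max a b c
    _ = dist b c := max_eq_right h.le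
  · calc dist b c ≤ max (dist b a) (dist a c) :=
        IsUltrametricDist.dist_triangle_max b a c
    _ ≤ dist a c := by
        apply max_le _ le_rfl
        by_contra hc
        push_neg at hc
        have := IsUltrametricDist.dist_triangle_max b a c
        rw [dist_comm b a] at hc this
        exact lt_irrefl _ (lt_of_le_of_lt this (max_lt h (hc.trans h)))

/-- If `Y` is a dense subset of an ultrametric space `X`, then the set of nonzero distances
realized in `Y` equals the set of nonzero distances realized in `X`. -/
theorem ultrametric_dense_realized_distances {X : Type*} [MetricSpace X] [IsUltrametricDist X]
    (Y : Set X) (hY : Dense Y) :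
    {r : ℝ | ∃ x ∈ Y, ∃ y ∈ Y, x ≠ y ∧ dist x y = r} =
      {r : ℝ | ∃ x y : X, x ≠ y ∧ dist x y = r} := by
  ext r
  simp only [Set.mem_setOf_eq]
  constructor
  · rintro ⟨x, hx, y, hy, hxy, rfl⟩
    exact ⟨x, y, hxy, rfl⟩
  · rintro ⟨x, y, hxy, rfl⟩
    have hd : 0 < dist x y := dist_pos.mpr hxy
    obtain ⟨x', hx'⟩ := Metric.dense_iff.mp hY x (dist x y) hd
    obtain ⟨hx'b, hx'Y⟩ := hx'
    rw [Metric.mem_ball] at hx'b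
    have h1 : dist x' y = dist x y := by
      exact ultra_iso hx'b
    have hd' : 0 < dist y x' := by rw [dist_comm]; rw [h1]; exact hd
    obtain ⟨y', hy'⟩ := Metric.dense_iff.mp hY y (dist y x') hd'
    obtain ⟨hy'b, hy'Y⟩ := hy'
    rw [Metric.mem_ball] at hy'b
    have h2 : dist y' x' = dist y x' := by
      exact ultra_iso hy'b
    have hfinal : dist x' y' = dist x y := by
      rw [dist_comm x' y', h2, dist_comm, h1]
    refine ⟨x', hx'Y, y', hy'Y, ?_, hfinal⟩
    intro h
    rw [h, dist_self] at hfinal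
    exact absurd hfinal.symm (ne_of_gt hd)
end

section
/- If an ultrametric space X has a dense subset of cardinality κ, then the set R(X) of nonzero distances realized in X has cardinality at most κ. -/
/-- If an ultrametric space `X` has a dense subset of cardinality at most `κ` (`κ` infinite),
then the set of nonzero realized distances of `X` has cardinality at most `κ`. -/
theorem ultrametric_card_realized_distances {X : Type} [MetricSpace X] [IsUltrametricDist X]
    (κ : Cardinal) (hκ : Cardinal.aleph0 ≤ κ) (s : Set X) (hs : Dense s)
    (hcard : Cardinal.mk s ≤ κ) :
    Cardinal.mk {r : ℝ | ∃ x y : X, x ≠ y ∧ dist x y = r} ≤ κ := by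
  have hsub : {r : ℝ | ∃ x y : X, x ≠ y ∧ dist x y = r} ⊆
      Set.range (fun p : s × s => dist (p.1 : X) (p.2 : X)) := by
    rintro r ⟨x, y, hxy, rfl⟩
    have hr : 0 < dist x y := dist_pos.mpr hxy
    obtain ⟨x', hx's, hx'⟩ := hs.exists_dist_lt x hr
    obtain ⟨y', hy's, hy'⟩ := hs.exists_dist_lt y hr
    refine ⟨(⟨x', hx's⟩, ⟨y', hy's⟩), ?_⟩
    have tri := fun a b c : X => IsUltrametricDist.dist_triangle_max a b c
    have h1 : dist x' y' ≤ dist x y := by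
      calc dist x' y' ≤ max (dist x' x) (dist x y') := tri x' x y'
        _ ≤ max (dist x' x) (max (dist x y) (dist y y')) :=
            max_le_max le_rfl (tri x y y')
        _ ≤ dist x y := by
            rw [dist_comm x' x]
            exact max_le hx'.le (max_le le_rfl hy'.le)
    have h2 : dist x y ≤ dist x' y' := by
      by_contra h
      push_neg at h
      have : dist x y ≤ max (dist x x') (max (dist x' y') (dist y' y)) :=
        le_trans (tri x x' y) (max_le_max le_rfl (tri x' y' y))
      have : dist x y < dist x y := lt_of_le_of_lt this (by
        rw [dist_comm y' y]
        exact max_lt hx' (max_lt h hy'))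
      exact lt_irrefl _ this
    exact le_antisymm h1 h2
  calc Cardinal.mk {r : ℝ | ∃ x y : X, x ≠ y ∧ dist x y = r}
      ≤ Cardinal.mk (Set.range (fun p : s × s => dist (p.1 : X) (p.2 : X))) :=
        Cardinal.mk_le_mk_of_subset hsub
    _ ≤ Cardinal.mk (s × s) := Cardinal.mk_range_le
    _ = Cardinal.mk s * Cardinal.mk s := by rw [Cardinal.mk_prod]; simp
    _ ≤ κ * κ := mul_le_mul' hcard hcard
    _ = κ := Cardinal.mul_eq_self hκ
end

section
/- Let (X_m, d_m) and (Y_m, d_m') for m ∈ ℕ be ultrametric spaces with all nonzero distances < r, and let X, Y be their disjoint unions with cross-distance r as above. Then X and Y are isometric if and only if there is a bijection f : ℕ → ℕ such that X_m is isometric to Y_{f(m)} for every m. -/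
open Classical in
noncomputable def sigmaDist {X : ℕ → Type u} (d : ∀ m, X m → X m → ℝ) (r : ℝ)
    (p q : Σ m, X m) : ℝ :=
  if h : p.1 = q.1 then d q.1 (h ▸ p.2) q.2 else r

theorem sigmaDist_same {X : ℕ → Type u} (d : ∀ m, X m → X m → ℝ) (r : ℝ)
    (m : ℕ) (x y : X m) : sigmaDist d r ⟨m, x⟩ ⟨m, y⟩ = d m x y := by
  simp [sigmaDist]

theorem sigmaDist_ne {X : ℕ → Type u} (d : ∀ m, X m → X m → ℝ) (r : ℝ)
    {p q : Σ m, X m} (h : p.1 ≠ q.1) : sigmaDist d r p q = r := dif_neg h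

theorem sigmaDist_lt_iff {X : ℕ → Type u} (d : ∀ m, X m → X m → ℝ) (r : ℝ)
    (hrpos : 0 < r) (hself : ∀ m x, d m x x = 0) (hlt : ∀ m x y, x ≠ y → d m x y < r)
    (p q : Σ m, X m) : sigmaDist d r p q < r ↔ p.1 = q.1 := by
  obtain ⟨m, x⟩ := p; obtain ⟨n, y⟩ := q
  constructor
  · intro h
    by_contra hne
    rw [sigmaDist_ne d r hne] at h
    exact lt_irrefl r h
  · intro h
    dsimp at h; subst h
    rw [sigmaDist_same]
    rcases eq_or_ne x y with rfl | hxy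
    · rw [hself]; exact hrpos
    · exact hlt m x y hxy

theorem sigma_eta {Y : ℕ → Type u} (s : Σ m, Y m) {n : ℕ} (h : s.1 = n) :
    s = ⟨n, h ▸ s.2⟩ := by
  obtain ⟨m, y⟩ := s; dsimp at h; subst h; rfl

/-- Let `(X_m, d_m)` and `(Y_m, d'_m)` be nonempty ultrametric spaces with all nonzero
distances strictly less than `r`, and let `X`, `Y` be their disjoint unions with
cross-distance `r`. Then `X` and `Y` are isometric iff there is a bijection
`f : ℕ → ℕ` with `X_m` isometric to `Y_{f(m)}` for every `m`. -/
theorem sigmaDist_isometric_iff {X Y : ℕ → Type u}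
    (d : ∀ m, X m → X m → ℝ) (d' : ∀ m, Y m → Y m → ℝ) (r : ℝ) (hrpos : 0 < r)
    (hXne : ∀ m, Nonempty (X m)) (hYne : ∀ m, Nonempty (Y m))
    (hXself : ∀ m x, d m x x = 0) (hXpos : ∀ m x y, x ≠ y → 0 < d m x y)
    (hXsymm : ∀ m x y, d m x y = d m y x)
    (hXultra : ∀ m x y z, d m x z ≤ max (d m x y) (d m y z))
    (hXlt : ∀ m x y, x ≠ y → d m x y < r)
    (hYself : ∀ m x, d' m x x = 0) (hYpos : ∀ m x y, x ≠ y → 0 < d' m x y)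
    (hYsymm : ∀ m x y, d' m x y = d' m y x)
    (hYultra : ∀ m x y z, d' m x z ≤ max (d' m x y) (d' m y z))
    (hYlt : ∀ m x y, x ≠ y → d' m x y < r) :
    (∃ φ : (Σ m, X m) → (Σ m, Y m), Function.Bijective φ ∧
        ∀ p q, sigmaDist d' r (φ p) (φ q) = sigmaDist d r p q) ↔
    (∃ f : ℕ → ℕ, Function.Bijective f ∧
        ∀ m, ∃ ψ : X m → Y (f m), Function.Bijective ψ ∧
          ∀ x y, d' (f m) (ψ x) (ψ y) = d m x y) := by
  constructor
  · rintro ⟨φ, ⟨hinj, hsurj⟩, hiso⟩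
    -- same-piece criterion
    have key : ∀ p q : Σ m, X m, (φ p).1 = (φ q).1 ↔ p.1 = q.1 := by
      intro p q
      rw [← sigmaDist_lt_iff d r hrpos hXself hXlt p q,
        ← sigmaDist_lt_iff d' r hrpos hYself hYlt (φ p) (φ q), hiso]
    have x₀ : ∀ m, X m := fun m => Classical.choice (hXne m)
    set f : ℕ → ℕ := fun m => (φ ⟨m, x₀ m⟩).1 with hf
    have piece : ∀ p : Σ m, X m, (φ p).1 = f p.1 := fun p =>
      (key p ⟨p.1, x₀ p.1⟩).mpr rfl
    have finj : Function.Injective f := by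
      intro m m' h
      exact (key ⟨m, x₀ m⟩ ⟨m', x₀ m'⟩).mp h
    have fsurj : Function.Surjective f := by
      intro n
      obtain ⟨p, hp⟩ := hsurj ⟨n, Classical.choice (hYne n)⟩
      exact ⟨p.1, by rw [← piece p, hp]⟩
    refine ⟨f, ⟨finj, fsurj⟩, fun m => ?_⟩
    set ψ : X m → Y (f m) := fun x => (piece ⟨m, x⟩) ▸ (φ ⟨m, x⟩).2 with hψ
    have hφψ : ∀ x : X m, φ ⟨m, x⟩ = ⟨f m, ψ x⟩ := fun x =>
      sigma_eta (φ ⟨m, x⟩) (piece ⟨m, x⟩)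
    refine ⟨ψ, ⟨?_, ?_⟩, ?_⟩
    · intro x x' h
      have : φ ⟨m, x⟩ = φ ⟨m, x'⟩ := by rw [hφψ, hφψ, h]
      have := hinj this
      simpa using this
    · intro y
      obtain ⟨p, hp⟩ := hsurj ⟨f m, y⟩
      have hm : p.1 = m := by
        apply finj
        rw [← piece p, hp]
      obtain ⟨m', x⟩ := p
      dsimp at hm; subst hm
      refine ⟨x, ?_⟩
      have := (hφψ x).symm.trans hp
      simpa using this
    · intro x y
      have := hiso ⟨m, x⟩ ⟨m, y⟩
      rw [hφψ x, hφψ y, sigmaDist_same, sigmaDist_same] at this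
      exact this
  · rintro ⟨f, ⟨finj, fsurj⟩, hψ⟩
    choose ψ hbij hd using hψ
    refine ⟨fun p => ⟨f p.1, ψ p.1 p.2⟩, ⟨?_, ?_⟩, ?_⟩
    · rintro ⟨m, x⟩ ⟨m', x'⟩ h
      have h1 : f m = f m' := congrArg Sigma.fst h
      have hm : m = m' := finj h1
      subst hm
      have h2 : ψ m x = ψ m x' := by simpa using h
      rw [(hbij m).1 h2]
    · rintro ⟨n, y⟩
      obtain ⟨m, rfl⟩ := fsurj n
      obtain ⟨x, hx⟩ := (hbij m).2 y
      exact ⟨⟨m, x⟩, by simp [hx]⟩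
    · rintro ⟨m, x⟩ ⟨m', y⟩
      rcases eq_or_ne m m' with rfl | hne
      · rw [sigmaDist_same, sigmaDist_same, hd]
      · rw [sigmaDist_ne d r hne, sigmaDist_ne d' r]
        exact fun h => hne (finj h)
end
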